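/- Let G be a graph, T ⊆ V(G), and let v ∈ T be a free vertex of the clique complex Δ(G). Then P_T(G) is not a minimal prime ideal of the binomial edge ideal J_G. -/

import Mathlib

/-- The graph obtained from `G` by removing all edges meeting `T`.  Vertices of `T` become
isolated, and the connected components of vertices outside of `T` are exactly the connected
components of the induced subgraph `G - T`; in particular two vertices `u, w ∉ T` lie in the
same connected component of `G - T` iff they are reachable in `G.avoid T`. -/
def SimpleGraph.avoid {V : Type*} (G : SimpleGraph V) (T : Set V) : SimpleGraph V where
  Adj u w := G.Adj u w ∧ u ∉ T ∧ w ∉ T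
  symm := ⟨fun _ _ h => ⟨h.1.symm, h.2.2, h.2.1⟩⟩
  loopless := ⟨fun u h => G.loopless.irrefl u h.1⟩

/-- The binomial `f_{ij} = x_i y_j - x_j y_i` in `S = K[x_1,…,x_n,y_1,…,y_n]`, where the
polynomial ring is realized as `MvPolynomial (V ⊕ V) K`, `x_i = X (Sum.inl i)` and
`y_i = X (Sum.inr i)`. -/
noncomputable def edgeBinomial (K : Type*) [Field K] {V : Type*} (i j : V) :
    MvPolynomial (V ⊕ V) K :=
  MvPolynomial.X (Sum.inl i) * MvPolynomial.X (Sum.inr j) -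
    MvPolynomial.X (Sum.inl j) * MvPolynomial.X (Sum.inr i)

/-- The binomial edge ideal `J_G` of a graph `G`, generated by the binomials
`f_{ij} = x_i y_j - x_j y_i` for all edges `{i,j}` of `G`. -/
noncomputable def binomialEdgeIdeal (K : Type*) [Field K] {V : Type*} (G : SimpleGraph V) :
    Ideal (MvPolynomial (V ⊕ V) K) :=
  Ideal.span {f | ∃ i j : V, G.Adj i j ∧ f = edgeBinomial K i j}

/-- The ideal `P_T(G) = (x_v, y_v : v ∈ T) + J_{K_1} + … + J_{K_{c(T)}}`, where
`K_1, …, K_{c(T)}` are the complete graphs on the vertex sets of the connected components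
of `G - T`; equivalently, it is generated by the variables `x_v, y_v` for `v ∈ T` together
with the binomials `f_{uw}` for all pairs of distinct vertices `u, w ∉ T` lying in the same
connected component of `G - T`. -/
noncomputable def primeIdealP (K : Type*) [Field K] {V : Type*} (G : SimpleGraph V)
    (T : Set V) : Ideal (MvPolynomial (V ⊕ V) K) :=
  Ideal.span
    ({f | ∃ v ∈ T, f = MvPolynomial.X (Sum.inl v) ∨ f = MvPolynomial.X (Sum.inr v)} ∪
      {f | ∃ u w : V, u ∉ T ∧ w ∉ T ∧ u ≠ w ∧ (G.avoid T).Reachable u w ∧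
        f = edgeBinomial K u w})

namespace BEIAux

open MvPolynomial

variable {V : Type*} (K : Type*) [Field K] (G : SimpleGraph V) (T' : Set V)

/-- The exponent vector of the image of a single variable under the Segre-type
parametrization attached to the components of `G.avoid T'`. -/
noncomputable def gv : V ⊕ V →
    (((G.avoid T').ConnectedComponent ⊕ (G.avoid T').ConnectedComponent ⊕ V) →₀ ℕ)
  | .inl u => Finsupp.single (.inl ((G.avoid T').connectedComponentMk u)) 1 +
      Finsupp.single (.inr (.inr u)) 1
  | .inr u => Finsupp.single (.inr (.inl ((G.avoid T').connectedComponentMk u))) 1 +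
      Finsupp.single (.inr (.inr u)) 1

/-- The induced map on exponent vectors. -/
noncomputable def gmap (m : (V ⊕ V) →₀ ℕ) :
    (((G.avoid T').ConnectedComponent ⊕ (G.avoid T').ConnectedComponent ⊕ V) →₀ ℕ) :=
  m.sum fun i k => k • gv G T' i

lemma gmap_add (m m' : (V ⊕ V) →₀ ℕ) :
    gmap G T' (m + m') = gmap G T' m + gmap G T' m' :=
  Finsupp.sum_add_index' (fun i => zero_smul ℕ (gv G T' i)) fun i b₁ b₂ => add_smul b₁ b₂ _

lemma gmap_single (i : V ⊕ V) (k : ℕ) :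
    gmap G T' (Finsupp.single i k) = k • gv G T' i :=
  Finsupp.sum_single_index (zero_smul ℕ _)

@[simp] lemma gmap_zero : gmap G T' 0 = 0 := Finsupp.sum_zero_index

/-- `Z`-coordinate of `gmap`. -/
lemma gmap_z (m : (V ⊕ V) →₀ ℕ) (u : V) :
    gmap G T' m (.inr (.inr u)) = m (.inl u) + m (.inr u) := by
  classical
  induction m using Finsupp.induction with
  | zero => simp
  | single_add i k f hif hk ih =>
    rw [gmap_add, gmap_single, Finsupp.add_apply, Finsupp.smul_apply, smul_eq_mul]
    rcases i with x | x <;>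
      simp only [gv, Finsupp.add_apply, Finsupp.single_apply, Finsupp.coe_add, Pi.add_apply] <;>
      split_ifs with h1 h2 <;> simp_all <;> omega

variable [Fintype V]

/-- First (`S`) coordinate of `gmap`. -/
lemma gmap_s [DecidableEq ((G.avoid T').ConnectedComponent)] (m : (V ⊕ V) →₀ ℕ) (γ : (G.avoid T').ConnectedComponent) :
    gmap G T' m (.inl γ) =
      ∑ u : V, if (G.avoid T').connectedComponentMk u = γ then m (.inl u) else 0 := by
  classical
  induction m using Finsupp.induction with
  | zero => simp
  | single_add i k f hif hk ih =>
    rw [gmap_add, gmap_single, Finsupp.add_apply, Finsupp.smul_apply, smul_eq_mul, ih]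
    have : ∀ u : V,
        (if (G.avoid T').connectedComponentMk u = γ then (Finsupp.single i k + f) (.inl u) else 0)
          = (if (G.avoid T').connectedComponentMk u = γ
              then (Finsupp.single i k) (.inl u) else 0)
            + (if (G.avoid T').connectedComponentMk u = γ then f (.inl u) else 0) := by
      intro u; split_ifs <;> simp [Finsupp.add_apply]
    rw [Finset.sum_congr rfl fun u _ => this u, Finset.sum_add_distrib]
    congr 1
    rcases i with x | x
    · rw [Finset.sum_eq_single x]
      · simp [gv, Finsupp.single_apply]
      · intro b _ hb
        simp [Finsupp.single_apply, Ne.symm hb]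
      · simp
    · simp [gv, Finsupp.single_apply]

/-- Second (`T`) coordinate of `gmap`. -/
lemma gmap_t [DecidableEq ((G.avoid T').ConnectedComponent)] (m : (V ⊕ V) →₀ ℕ) (γ : (G.avoid T').ConnectedComponent) :
    gmap G T' m (.inr (.inl γ)) =
      ∑ u : V, if (G.avoid T').connectedComponentMk u = γ then m (.inr u) else 0 := by
  classical
  induction m using Finsupp.induction with
  | zero => simp
  | single_add i k f hif hk ih =>
    rw [gmap_add, gmap_single, Finsupp.add_apply, Finsupp.smul_apply, smul_eq_mul, ih]
    have : ∀ u : V,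
        (if (G.avoid T').connectedComponentMk u = γ then (Finsupp.single i k + f) (.inr u) else 0)
          = (if (G.avoid T').connectedComponentMk u = γ
              then (Finsupp.single i k) (.inr u) else 0)
            + (if (G.avoid T').connectedComponentMk u = γ then f (.inr u) else 0) := by
      intro u; split_ifs <;> simp [Finsupp.add_apply]
    rw [Finset.sum_congr rfl fun u _ => this u, Finset.sum_add_distrib]
    congr 1
    rcases i with x | x
    · simp [gv, Finsupp.single_apply]
    · rw [Finset.sum_eq_single x]
      · simp [gv, Finsupp.single_apply]
      · intro b _ hb
        simp [Finsupp.single_apply, Ne.symm hb]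
      · simp

open Classical in
/-- The Segre-type parametrization. -/
noncomputable def phiFun : V ⊕ V →
    MvPolynomial ((G.avoid T').ConnectedComponent ⊕ (G.avoid T').ConnectedComponent ⊕ V) K
  | .inl u => if u ∈ T' then 0 else
      X (.inl ((G.avoid T').connectedComponentMk u)) * X (.inr (.inr u))
  | .inr u => if u ∈ T' then 0 else
      X (.inr (.inl ((G.avoid T').connectedComponentMk u))) * X (.inr (.inr u))

lemma phiFun_good (i : V ⊕ V) (h : Sum.elim id id i ∉ T') :
    phiFun K G T' i = monomial (gv G T' i) 1 := by
  have hX : ∀ (σ : Type _) (a b : σ),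
      (X a * X b : MvPolynomial σ K) =
        monomial (Finsupp.single a 1 + Finsupp.single b 1) 1 := by
    intro σ a b
    rw [show (X a : MvPolynomial σ K) = monomial (Finsupp.single a 1) 1 from rfl,
      show (X b : MvPolynomial σ K) = monomial (Finsupp.single b 1) 1 from rfl,
      monomial_mul, one_mul]
  rcases i with x | x <;> simp only [Sum.elim_inl, Sum.elim_inr, id] at h <;>
    simp only [phiFun, if_neg h, gv] <;> exact hX _ _ _

/-- Goodness of an exponent vector : it does not involve variables from `T'`. -/
def Good (m : (V ⊕ V) →₀ ℕ) : Prop := ∀ u ∈ T', m (.inl u) = 0 ∧ m (.inr u) = 0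

lemma psi_monomial (m : (V ⊕ V) →₀ ℕ) (r : K) (h : Good T' m) :
    MvPolynomial.aeval (phiFun K G T') (monomial m r) = monomial (gmap G T' m) r := by
  classical
  induction m using Finsupp.induction with
  | zero => simp [monomial_zero', algebraMap_eq]
  | single_add i k f hif hk ih =>
    have hgf : Good T' f := by
      intro u hu
      have h1 := (h u hu).1
      have h2 := (h u hu).2
      rw [Finsupp.add_apply] at h1 h2
      omega
    have hi : Sum.elim id id i ∉ T' := by
      intro hiT'
      rcases i with x | x <;> simp only [Sum.elim_inl, Sum.elim_inr, id] at hiT'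
      · have := (h x hiT').1; rw [Finsupp.add_apply, Finsupp.single_apply, if_pos rfl] at this
        omega
      · have := (h x hiT').2; rw [Finsupp.add_apply, Finsupp.single_apply, if_pos rfl] at this
        omega
    rw [monomial_single_add, map_mul, map_pow, aeval_X, phiFun_good K G T' i hi,
      ih hgf, monomial_pow, one_pow, monomial_mul, one_mul, gmap_add, gmap_single]

lemma psi_monomial_bad (m : (V ⊕ V) →₀ ℕ) (r : K) (h : ¬ Good T' m) :
    MvPolynomial.aeval (phiFun K G T') (monomial m r) = 0 := by
  classical
  unfold Good at h
  push_neg at h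
  obtain ⟨u, huT', hu⟩ := h
  rw [aeval_monomial]
  have : ∃ i : V ⊕ V, m i ≠ 0 ∧ phiFun K G T' i = 0 := by
    by_cases h1 : m (.inl u) = 0
    · exact ⟨.inr u, hu h1, by simp [phiFun, huT']⟩
    · exact ⟨.inl u, h1, by simp [phiFun, huT']⟩
  obtain ⟨i, hi, hphi⟩ := this
  rw [Finsupp.prod, Finset.prod_eq_zero (Finsupp.mem_support_iff.2 hi)
    (by rw [hphi]; exact zero_pow hi), mul_zero]

end BEIAux

namespace BEIAux

open MvPolynomial

variable {V : Type*} (K : Type*) [Field K] (G : SimpleGraph V) (T : Set V)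

lemma X_mem_P {u : V} (hu : u ∈ T) :
    (X (.inl u) : MvPolynomial (V ⊕ V) K) ∈ primeIdealP K G T :=
  Ideal.subset_span (Or.inl ⟨u, hu, Or.inl rfl⟩)

lemma Y_mem_P {u : V} (hu : u ∈ T) :
    (X (.inr u) : MvPolynomial (V ⊕ V) K) ∈ primeIdealP K G T :=
  Ideal.subset_span (Or.inl ⟨u, hu, Or.inr rfl⟩)

lemma binGen_mem {u w : V} (hu : u ∉ T) (hw : w ∉ T) (hne : u ≠ w)
    (hr : (G.avoid T).Reachable u w) : edgeBinomial K u w ∈ primeIdealP K G T :=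
  Ideal.subset_span (Or.inr ⟨u, w, hu, hw, hne, hr, rfl⟩)

lemma touch_mem (m : (V ⊕ V) →₀ ℕ) (r : K) {u : V} (hu : u ∈ T)
    (h : m (.inl u) + m (.inr u) ≠ 0) : (monomial m r : MvPolynomial (V ⊕ V) K) ∈ primeIdealP K G T := by
  by_cases h1 : m (.inl u) = 0
  · have h2 : 1 ≤ m (.inr u) := by omega
    have hle : Finsupp.single (Sum.inr u : V ⊕ V) 1 ≤ m := Finsupp.single_le_iff.2 h2
    have : (monomial m r : MvPolynomial (V ⊕ V) K)
        = monomial (m - Finsupp.single (.inr u) 1) r * X (.inr u) := by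
      rw [show (X (.inr u) : MvPolynomial (V ⊕ V) K)
          = monomial (Finsupp.single (.inr u) 1) 1 from rfl, monomial_mul, mul_one,
        tsub_add_cancel_of_le hle]
    rw [this]
    exact Ideal.mul_mem_left _ _ (Y_mem_P K G T hu)
  · have h2 : 1 ≤ m (.inl u) := by omega
    have hle : Finsupp.single (Sum.inl u : V ⊕ V) 1 ≤ m := Finsupp.single_le_iff.2 h2
    have : (monomial m r : MvPolynomial (V ⊕ V) K)
        = monomial (m - Finsupp.single (.inl u) 1) r * X (.inl u) := by
      rw [show (X (.inl u) : MvPolynomial (V ⊕ V) K)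
          = monomial (Finsupp.single (.inl u) 1) 1 from rfl, monomial_mul, mul_one,
        tsub_add_cancel_of_le hle]
    rw [this]
    exact Ideal.mul_mem_left _ _ (X_mem_P K G T hu)

end BEIAux

namespace BEIAux2

open MvPolynomial BEIAux

variable {V : Type*} (K : Type*) [Field K] (G : SimpleGraph V) (T : Set V)

lemma X_mul_X {σ : Type*} (a b : σ) :
    (X a * X b : MvPolynomial σ K) = monomial (Finsupp.single a 1 + Finsupp.single b 1) 1 := by
  rw [show (X a : MvPolynomial σ K) = monomial (Finsupp.single a 1) 1 from rfl,
    show (X b : MvPolynomial σ K) = monomial (Finsupp.single b 1) 1 from rfl,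
    monomial_mul, one_mul]

lemma bin_mem [Fintype V] (T' : Set V)
    (hreach : ∀ u w : V, u ∉ T → w ∉ T → (G.avoid T').Reachable u w →
      (G.avoid T).Reachable u w)
    (m m' : (V ⊕ V) →₀ ℕ) (hg : gmap G T' m = gmap G T' m') :
    (monomial m 1 - monomial m' 1 : MvPolynomial (V ⊕ V) K) ∈ primeIdealP K G T := by
  classical
  suffices h : ∀ N (m m' : (V ⊕ V) →₀ ℕ), gmap G T' m = gmap G T' m' →
      (∑ u : V, Nat.dist (m (.inl u)) (m' (.inl u))) ≤ N →
      (monomial m 1 - monomial m' 1 : MvPolynomial (V ⊕ V) K) ∈ primeIdealP K G T by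
    exact h _ m m' hg le_rfl
  intro N
  induction N with
  | zero =>
    intro m m' hg hN
    have hz : ∀ u : V, m (.inl u) + m (.inr u) = m' (.inl u) + m' (.inr u) := by
      intro u
      have h1 := congrArg (fun f => f (Sum.inr (Sum.inr u))) hg
      simpa only [gmap_z] using h1
    have hd : ∀ u : V, m (.inl u) = m' (.inl u) := by
      intro u
      have hle := Finset.single_le_sum
        (f := fun x : V => Nat.dist (m (.inl x)) (m' (.inl x)))
        (fun _ _ => Nat.zero_le _) (Finset.mem_univ u)
      exact Nat.eq_of_dist_eq_zero (Nat.le_zero.mp (hle.trans hN))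
    have : m = m' := Finsupp.ext fun i => by
      rcases i with u | u
      · exact hd u
      · have := hz u; have := hd u; omega
    rw [this, sub_self]
    exact zero_mem _
  | succ N ih =>
    intro m m' hg hN
    have hz : ∀ u : V, m (.inl u) + m (.inr u) = m' (.inl u) + m' (.inr u) := by
      intro u
      have h1 := congrArg (fun f => f (Sum.inr (Sum.inr u))) hg
      simpa only [gmap_z] using h1
    by_cases hT : ∃ u ∈ T, m (.inl u) + m (.inr u) ≠ 0
    · obtain ⟨u, huT, hu⟩ := hT
      exact sub_mem (touch_mem K G T m 1 huT hu)
        (touch_mem K G T m' 1 huT (by have := hz u; omega))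
    · push_neg at hT
      have hTm' : ∀ u ∈ T, m' (.inl u) + m' (.inr u) = 0 := fun u hu => by
        have h1 := hz u; have h2 := hT u hu; omega
      by_cases heq : ∀ u : V, m (.inl u) = m' (.inl u)
      · have : m = m' := Finsupp.ext fun i => by
          rcases i with u | u
          · exact heq u
          · have := hz u; have := heq u; omega
        rw [this, sub_self]
        exact zero_mem _
      · push_neg at heq
        obtain ⟨u0, hu0⟩ := heq
        have step : ∀ (p q : (V ⊕ V) →₀ ℕ), gmap G T' p = gmap G T' q →
            (∀ x ∈ T, p (.inl x) + p (.inr x) = 0) →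
            (∀ x ∈ T, q (.inl x) + q (.inr x) = 0) →
            ∀ u : V, q (.inl u) < p (.inl u) →
            ∃ p₂ : (V ⊕ V) →₀ ℕ, gmap G T' p₂ = gmap G T' p ∧
              (monomial p 1 - monomial p₂ 1 : MvPolynomial (V ⊕ V) K) ∈ primeIdealP K G T ∧
              (∑ x : V, Nat.dist (p₂ (.inl x)) (q (.inl x)))
                < ∑ x : V, Nat.dist (p (.inl x)) (q (.inl x)) := by
          intro p q hpq hTp hTq u hu
          have hzpq : ∀ x : V, p (.inl x) + p (.inr x) = q (.inl x) + q (.inr x) := by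
            intro x
            have h1 := congrArg (fun f => f (Sum.inr (Sum.inr x))) hpq
            simpa only [gmap_z] using h1
          have hS := congrArg
            (fun f => f (Sum.inl ((G.avoid T').connectedComponentMk u))) hpq
          simp only [gmap_s] at hS
          have hw : ∃ w : V, (G.avoid T').connectedComponentMk w
              = (G.avoid T').connectedComponentMk u ∧ p (.inl w) < q (.inl w) := by
            by_contra hcon
            push_neg at hcon
            have hlt : (∑ x : V, if (G.avoid T').connectedComponentMk x
                  = (G.avoid T').connectedComponentMk u then q (.inl x) else 0)
                < ∑ x : V, if (G.avoid T').connectedComponentMk x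
                  = (G.avoid T').connectedComponentMk u then p (.inl x) else 0 := by
              apply Finset.sum_lt_sum
              · intro x _
                split_ifs with hx
                · exact hcon x hx
                · exact le_refl 0
              · exact ⟨u, Finset.mem_univ u, by simp only [if_pos rfl]; exact hu⟩
            omega
          obtain ⟨w, hws, hww⟩ := hw
          have hbw : 1 ≤ p (.inr w) := by have := hzpq w; omega
          have hau : 1 ≤ p (.inl u) := by omega
          have hne : u ≠ w := by rintro rfl; omega
          have huT : u ∉ T := fun h => by have := hTp u h; omega
          have hwT : w ∉ T := fun h => by have := hTq w h; omega
          have hreach' : (G.avoid T).Reachable u w :=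
            hreach u w huT hwT (SimpleGraph.ConnectedComponent.exact hws.symm)
          set σ : (V ⊕ V) →₀ ℕ :=
            Finsupp.single (.inl u) 1 + Finsupp.single (.inr w) 1 with hσdef
          set σ' : (V ⊕ V) →₀ ℕ :=
            Finsupp.single (.inl w) 1 + Finsupp.single (.inr u) 1 with hσ'def
          have hσle : σ ≤ p := by
            rw [Finsupp.le_def]
            intro i
            rcases i with x | x
            · by_cases hx : x = u
              · subst hx
                simpa [hσdef, Finsupp.single_apply] using hau
              · simp [hσdef, Finsupp.single_apply, Ne.symm hx]
            · by_cases hx : x = w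
              · subst hx
                simpa [hσdef, Finsupp.single_apply] using hbw
              · simp [hσdef, Finsupp.single_apply, Ne.symm hx]
          refine ⟨p - σ + σ', ?_, ?_, ?_⟩
          · have hgσ : gmap G T' σ = gmap G T' σ' := by
              rw [hσdef, hσ'def, gmap_add, gmap_add, gmap_single, gmap_single,
                gmap_single, gmap_single]
              simp only [one_smul, gv]
              rw [hws]
              abel
            calc gmap G T' (p - σ + σ') = gmap G T' (p - σ) + gmap G T' σ' :=
                  gmap_add G T' _ _
              _ = gmap G T' (p - σ) + gmap G T' σ := by rw [hgσ]
              _ = gmap G T' (p - σ + σ) := (gmap_add G T' _ _).symm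
              _ = gmap G T' p := by rw [tsub_add_cancel_of_le hσle]
          · have hbin : (monomial p 1 - monomial (p - σ + σ') 1 : MvPolynomial (V ⊕ V) K)
                = monomial (p - σ) 1 * edgeBinomial K u w := by
              rw [edgeBinomial, X_mul_X, X_mul_X, mul_sub, monomial_mul, monomial_mul,
                ← hσdef, ← hσ'def, tsub_add_cancel_of_le hσle, mul_one]
            rw [hbin]
            exact Ideal.mul_mem_left _ _ (binGen_mem K G T huT hwT hne hreach')
          · have c1 : (p - σ + σ') (.inl u) = p (.inl u) - 1 := by
              simp [hσdef, hσ'def, Finsupp.tsub_apply, Finsupp.single_apply, Ne.symm hne]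
            have c2 : (p - σ + σ') (.inl w) = p (.inl w) + 1 := by
              simp [hσdef, hσ'def, Finsupp.tsub_apply, Finsupp.single_apply, hne]
            have c3 : ∀ x : V, x ≠ u → x ≠ w → (p - σ + σ') (.inl x) = p (.inl x) := by
              intro x hxu hxw
              simp [hσdef, hσ'def, Finsupp.tsub_apply, Finsupp.single_apply,
                Ne.symm hxu, Ne.symm hxw]
            apply Finset.sum_lt_sum
            · intro x _
              by_cases hxu : x = u
              · subst hxu
                rw [c1]
                simp only [Nat.dist]
                omega
              · by_cases hxw : x = w
                · subst hxw
                  rw [c2]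
                  simp only [Nat.dist]
                  omega
                · rw [c3 x hxu hxw]
            · refine ⟨u, Finset.mem_univ u, ?_⟩
              rw [c1]
              simp only [Nat.dist]
              omega
        rcases lt_or_gt_of_ne hu0 with hlt | hgt
        · obtain ⟨m₂, hgm₂, hmem₂, hlt₂⟩ := step m' m hg.symm hTm' hT u0 hlt
          have hsym1 : (∑ x : V, Nat.dist (m₂ (.inl x)) (m (.inl x)))
              = ∑ x : V, Nat.dist (m (.inl x)) (m₂ (.inl x)) :=
            Finset.sum_congr rfl fun x _ => Nat.dist_comm _ _
          have hsym2 : (∑ x : V, Nat.dist (m' (.inl x)) (m (.inl x)))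
              = ∑ x : V, Nat.dist (m (.inl x)) (m' (.inl x)) :=
            Finset.sum_congr rfl fun x _ => Nat.dist_comm _ _
          have h1 : (monomial m 1 - monomial m₂ 1 : MvPolynomial (V ⊕ V) K)
              ∈ primeIdealP K G T := ih m m₂ (hg.trans hgm₂.symm) (by omega)
          have hsplit : (monomial m 1 - monomial m' 1 : MvPolynomial (V ⊕ V) K)
              = (monomial m 1 - monomial m₂ 1) - (monomial m' 1 - monomial m₂ 1) := by ring
          rw [hsplit]
          exact sub_mem h1 hmem₂
        · obtain ⟨m₂, hgm₂, hmem₂, hlt₂⟩ := step m m' hg hT hTm' u0 hgt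
          have h1 : (monomial m₂ 1 - monomial m' 1 : MvPolynomial (V ⊕ V) K)
              ∈ primeIdealP K G T := ih m₂ m' (hgm₂.trans hg) (by omega)
          have hsplit : (monomial m 1 - monomial m' 1 : MvPolynomial (V ⊕ V) K)
              = (monomial m 1 - monomial m₂ 1) + (monomial m₂ 1 - monomial m' 1) := by ring
          rw [hsplit]
          exact add_mem hmem₂ h1

end BEIAux2

namespace BEIAux3

open MvPolynomial BEIAux

variable {V : Type*} (K : Type*) [Field K] (G : SimpleGraph V) (T : Set V)

lemma ker_le [Fintype V] (T' : Set V) (hT'T : T' ⊆ T)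
    (hreach : ∀ u w : V, u ∉ T → w ∉ T → (G.avoid T').Reachable u w →
      (G.avoid T).Reachable u w) :
    ∀ f : MvPolynomial (V ⊕ V) K, MvPolynomial.aeval (phiFun K G T') f = 0 →
      f ∈ primeIdealP K G T := by
  classical
  suffices h : ∀ n (f : MvPolynomial (V ⊕ V) K), f.support.card ≤ n →
      MvPolynomial.aeval (phiFun K G T') f = 0 → f ∈ primeIdealP K G T by
    exact fun f hf => h _ f le_rfl hf
  intro n
  induction n with
  | zero =>
    intro f hcard _
    have : f = 0 := by
      rw [← MvPolynomial.support_eq_empty]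
      exact Finset.card_eq_zero.mp (Nat.le_zero.mp hcard)
    rw [this]
    exact zero_mem _
  | succ n ih =>
    intro f hcard hf0
    by_cases hf : f = 0
    · rw [hf]; exact zero_mem _
    obtain ⟨m₀, hm₀⟩ := MvPolynomial.support_nonempty.mpr hf
    have hc₀ : coeff m₀ f ≠ 0 := MvPolynomial.mem_support_iff.mp hm₀
    by_cases hgood : Good T' m₀
    · -- the leading monomial is good, pair it with another one with the same image
      have hsum : (MvPolynomial.aeval (phiFun K G T') f)
          = ∑ m ∈ f.support, MvPolynomial.aeval (phiFun K G T') (monomial m (coeff m f)) := by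
        conv_lhs => rw [f.as_sum]
        rw [map_sum]
      have hco : (∑ m ∈ f.support,
          (if Good T' m ∧ gmap G T' m = gmap G T' m₀ then coeff m f else 0)) = 0 := by
        have h0 : coeff (gmap G T' m₀) (MvPolynomial.aeval (phiFun K G T') f) = 0 := by
          rw [hf0]; simp
        rw [hsum, coeff_sum] at h0
        refine Eq.trans ?_ h0
        apply Finset.sum_congr rfl
        intro m _
        by_cases hgm : Good T' m
        · rw [psi_monomial K G T' m _ hgm, coeff_monomial]
          by_cases he : gmap G T' m = gmap G T' m₀ <;> simp [he, hgm]
        · rw [psi_monomial_bad K G T' m _ hgm]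
          simp [hgm]
      have hex : ∃ m₁ ∈ f.support, m₁ ≠ m₀ ∧ Good T' m₁ ∧
          gmap G T' m₁ = gmap G T' m₀ := by
        by_contra hcon
        rw [Finset.sum_eq_single_of_mem m₀ hm₀ (fun b hb hbne => by
          by_cases h1 : Good T' b ∧ gmap G T' b = gmap G T' m₀
          · exact absurd ⟨b, hb, hbne, h1.1, h1.2⟩ hcon
          · exact if_neg h1)] at hco
        rw [if_pos ⟨hgood, rfl⟩] at hco
        exact hc₀ hco
      obtain ⟨m₁, hm₁s, hm₁ne, hgood₁, hg₁⟩ := hex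
      set c₀ := coeff m₀ f with hc₀def
      set f' := f - C c₀ * (monomial m₀ 1 - monomial m₁ 1) with hf'def
      have hsupp : f'.support ⊆ f.support.erase m₀ := by
        intro m hm
        rw [MvPolynomial.mem_support_iff] at hm
        rw [Finset.mem_erase, MvPolynomial.mem_support_iff]
        by_cases hmm₀ : m = m₀
        · exfalso
          apply hm
          subst hmm₀
          simp [hf'def, coeff_sub, coeff_C_mul, coeff_monomial, hm₁ne, hc₀def]
        · refine ⟨hmm₀, ?_⟩
          intro hzero
          apply hm
          have hmm₁ : m ≠ m₁ := by
            rintro rfl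
            exact (MvPolynomial.mem_support_iff.mp hm₁s) hzero
          simp [hf'def, coeff_sub, coeff_C_mul, coeff_monomial, hzero,
            Ne.symm hmm₀, Ne.symm hmm₁]
      have hcard' : f'.support.card ≤ n := by
        have h1 := Finset.card_le_card hsupp
        rw [Finset.card_erase_of_mem hm₀] at h1
        omega
      have hψ' : MvPolynomial.aeval (phiFun K G T') f' = 0 := by
        rw [hf'def, map_sub, map_mul, hf0, map_sub,
          psi_monomial K G T' m₀ (1 : K) hgood, psi_monomial K G T' m₁ (1 : K) hgood₁, hg₁]
        simp
      have hstep : f = f' + C c₀ * (monomial m₀ 1 - monomial m₁ 1) := by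
        rw [hf'def]; ring
      rw [hstep]
      exact add_mem (ih f' hcard' hψ')
        (Ideal.mul_mem_left _ _ (BEIAux2.bin_mem K G T T' hreach m₀ m₁ hg₁.symm))
    · -- the leading monomial involves a variable from T'
      set c₀ := coeff m₀ f with hc₀def
      set f' := f - monomial m₀ c₀ with hf'def
      have hsupp : f'.support ⊆ f.support.erase m₀ := by
        intro m hm
        rw [MvPolynomial.mem_support_iff] at hm
        rw [Finset.mem_erase, MvPolynomial.mem_support_iff]
        by_cases hmm₀ : m = m₀
        · exfalso
          apply hm
          subst hmm₀
          simp [hf'def, coeff_sub, coeff_monomial, hc₀def]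
        · refine ⟨hmm₀, ?_⟩
          intro hzero
          apply hm
          simp [hf'def, coeff_sub, coeff_monomial, hzero, Ne.symm hmm₀]
      have hcard' : f'.support.card ≤ n := by
        have h1 := Finset.card_le_card hsupp
        rw [Finset.card_erase_of_mem hm₀] at h1
        omega
      have hψ' : MvPolynomial.aeval (phiFun K G T') f' = 0 := by
        rw [hf'def, map_sub, hf0, psi_monomial_bad K G T' m₀ c₀ hgood, sub_zero]
      have hmono : (monomial m₀ c₀ : MvPolynomial (V ⊕ V) K) ∈ primeIdealP K G T := by
        have h1 : ¬ Good T' m₀ := hgood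
        unfold Good at h1
        push_neg at h1
        obtain ⟨u, huT', hu⟩ := h1
        refine touch_mem K G T m₀ c₀ (hT'T huT') ?_
        by_cases h2 : m₀ (.inl u) = 0
        · have := hu h2; omega
        · omega
      have hstep : f = f' + monomial m₀ c₀ := by rw [hf'def]; ring
      rw [hstep]
      exact add_mem (ih f' hcard' hψ') hmono

end BEIAux3

namespace BEIAux4

open SimpleGraph

lemma clique_adj {V : Type*} [Fintype V] (G : SimpleGraph V) (v : V)
    (hfree : ∃! s : Set V, Maximal (fun c => G.IsClique c) s ∧ v ∈ s) :
    ∀ a b : V, G.Adj v a → G.Adj v b → a ≠ b → G.Adj a b := by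
  classical
  obtain ⟨s, hs, huniq⟩ := hfree
  have hext : ∀ a : V, G.Adj v a → a ∈ s := by
    intro a hva
    have hpair : G.IsClique {v, a} := isClique_pair.mpr fun _ => hva
    have hfin : ({c : Set V | G.IsClique c ∧ {v, a} ⊆ c}).Finite := Set.toFinite _
    obtain ⟨t, ht, htmax⟩ :=
      Set.Finite.exists_maximalFor id _ hfin ⟨{v, a}, hpair, subset_rfl⟩
    have htm : Maximal (fun c => G.IsClique c) t := by
      refine ⟨ht.1, ?_⟩
      intro c hc htc
      have : t = c := le_antisymm htc (htmax ⟨hc, ht.2.trans htc⟩ htc)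
      exact this ▸ le_rfl
    have hvt : v ∈ t := ht.2 (by simp)
    have hat : a ∈ t := ht.2 (by simp)
    have hts : t = s := huniq t ⟨htm, hvt⟩
    exact hts ▸ hat
  intro a b hva hvb hab
  exact hs.1.1 (hext a hva) (hext b hvb) hab

lemma avoid_adj {V : Type*} {G : SimpleGraph V} {T : Set V} {u w : V} :
    (G.avoid T).Adj u w ↔ G.Adj u w ∧ u ∉ T ∧ w ∉ T := Iff.rfl

lemma reach_avoid {V : Type*} (G : SimpleGraph V) (T : Set V) (v : V) (hvT : v ∈ T)
    (hadj : ∀ a b : V, G.Adj v a → G.Adj v b → a ≠ b → G.Adj a b) :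
    ∀ u w : V, u ∉ T → w ∉ T → (G.avoid (T \ {v})).Reachable u w →
      (G.avoid T).Reachable u w := by
  intro u w hu hw hr
  obtain ⟨p⟩ := hr
  suffices h : ∀ n (u : V), u ∉ T → ∀ p : (G.avoid (T \ {v})).Walk u w, p.length ≤ n →
      (G.avoid T).Reachable u w by
    exact h p.length u hu p le_rfl
  clear hu p
  intro n
  induction n with
  | zero =>
    intro u hu p hp
    cases p with
    | nil => exact Reachable.refl _
    | cons h q => simp [SimpleGraph.Walk.length_cons] at hp
  | succ n ihn =>
    intro u hu p hp
    cases p with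
    | nil => exact Reachable.refl _
    | cons h q =>
      rename_i x
      by_cases hx : x ∈ T
      · have hxv : x = v := by
          have h1 : x ∉ T \ {v} := (avoid_adj.1 h).2.2
          simp [Set.mem_diff] at h1
          exact h1 hx
        subst hxv
        cases q with
        | nil => exact absurd hvT hw
        | cons h₂ q₂ =>
          rename_i y
          have hyv : y ≠ x := (avoid_adj.1 h₂).1.ne'
          have hyT : y ∉ T := by
            have h1 : y ∉ T \ {x} := (avoid_adj.1 h₂).2.2
            simp [Set.mem_diff] at h1
            intro hyT
            exact hyv (h1 hyT)
          have hlen : q₂.length ≤ n := by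
            simp [SimpleGraph.Walk.length_cons] at hp
            omega
          by_cases hyu : y = u
          · subst hyu
            exact ihn y hu q₂ hlen
          · have hadj2 : G.Adj u y := hadj u y (avoid_adj.1 h).1.symm (avoid_adj.1 h₂).1 (Ne.symm hyu)
            have huy : (G.avoid T).Adj u y := avoid_adj.2 ⟨hadj2, hu, hyT⟩
            exact huy.reachable.trans (ihn y hyT q₂ hlen)
      · have huxT : (G.avoid T).Adj u x := avoid_adj.2 ⟨(avoid_adj.1 h).1, hu, hx⟩
        have hlen : q.length ≤ n := by
          simp [SimpleGraph.Walk.length_cons] at hp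
          omega
        exact huxT.reachable.trans (ihn x hx q hlen)

end BEIAux4

/-- Let `G` be a graph, `T ⊆ V(G)`, and let `v ∈ T` be a free vertex of the clique complex
`Δ(G)` (i.e. `v` belongs to exactly one maximal clique of `G`).  Then `P_T(G)` is not a
minimal prime ideal of the binomial edge ideal `J_G`. -/
theorem primeIdealP_not_minimalPrime {V K : Type*} [Fintype V] [Field K] (G : SimpleGraph V)
    (T : Set V) (v : V) (hvT : v ∈ T)
    (hfree : ∃! s : Set V, Maximal (fun c => G.IsClique c) s ∧ v ∈ s) :
    primeIdealP K G T ∉ (binomialEdgeIdeal K G).minimalPrimes := by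
  classical
  intro hmin
  obtain ⟨hPmem, hPmin⟩ := hmin
  set T' : Set V := T \ {v} with hT'def
  have hT'T : T' ⊆ T := Set.diff_subset
  have hadj := BEIAux4.clique_adj G v hfree
  have hreach := BEIAux4.reach_avoid G T v hvT hadj
  set ψ : MvPolynomial (V ⊕ V) K →+*
      MvPolynomial ((G.avoid T').ConnectedComponent ⊕ (G.avoid T').ConnectedComponent ⊕ V) K :=
    (MvPolynomial.aeval (BEIAux.phiFun K G T')).toRingHom with hψdef
  have hker_prime : (RingHom.ker ψ).IsPrime := RingHom.ker_isPrime ψ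
  have hJker : binomialEdgeIdeal K G ≤ RingHom.ker ψ := by
    rw [binomialEdgeIdeal, Ideal.span_le]
    rintro f ⟨i, j, hij, rfl⟩
    rw [SetLike.mem_coe, RingHom.mem_ker]
    by_cases hi : i ∈ T'
    · simp [hψdef, edgeBinomial, map_sub, map_mul, BEIAux.phiFun, hi]
    by_cases hj : j ∈ T'
    · simp [hψdef, edgeBinomial, map_sub, map_mul, BEIAux.phiFun, hj]
    have hcc : (G.avoid T').connectedComponentMk i = (G.avoid T').connectedComponentMk j :=
      SimpleGraph.ConnectedComponent.sound
        (SimpleGraph.Adj.reachable (BEIAux4.avoid_adj.2 ⟨hij, hi, hj⟩ : (G.avoid T').Adj i j))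
    show ψ (edgeBinomial K i j) = 0
    rw [edgeBinomial, map_sub, map_mul, map_mul]
    have hXi : ψ (MvPolynomial.X (.inl i)) = BEIAux.phiFun K G T' (.inl i) :=
      MvPolynomial.aeval_X _ _
    have hXj : ψ (MvPolynomial.X (.inl j)) = BEIAux.phiFun K G T' (.inl j) :=
      MvPolynomial.aeval_X _ _
    have hYi : ψ (MvPolynomial.X (.inr i)) = BEIAux.phiFun K G T' (.inr i) :=
      MvPolynomial.aeval_X _ _
    have hYj : ψ (MvPolynomial.X (.inr j)) = BEIAux.phiFun K G T' (.inr j) :=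
      MvPolynomial.aeval_X _ _
    rw [hXi, hXj, hYi, hYj]
    simp only [BEIAux.phiFun, if_neg hi, if_neg hj]
    rw [hcc]
    ring
  have hker_le : RingHom.ker ψ ≤ primeIdealP K G T := fun f hf =>
    BEIAux3.ker_le K G T T' hT'T hreach f (RingHom.mem_ker.mp hf)
  have hPle := hPmin ⟨hker_prime, hJker⟩ hker_le
  have hxv : (MvPolynomial.X (.inl v) : MvPolynomial (V ⊕ V) K) ∈ primeIdealP K G T :=
    BEIAux.X_mem_P K G T hvT
  have h0 := hPle hxv
  rw [RingHom.mem_ker] at h0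
  have hv' : v ∉ T' := by simp [hT'def]
  have hval : ψ (MvPolynomial.X (.inl v)) = BEIAux.phiFun K G T' (.inl v) :=
    MvPolynomial.aeval_X _ _
  rw [hval] at h0
  simp only [BEIAux.phiFun, if_neg hv'] at h0
  exact mul_ne_zero (MvPolynomial.X_ne_zero _) (MvPolynomial.X_ne_zero _) h0
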